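/- For the anti-Fibonacci sequence (a = (1,1)), the subsequence A_{2n+1} is the arithmetic progression A_{2n+1} = 3 + 10n for all n ≥ 0, and every positive integer congruent to 3 modulo 10 is an anti-Fibonacci number. -/
import Mathlib


/-- `A` and `B` (indexed from 1) are complementary strictly increasing sequences
of positive integers: every positive integer lies in exactly one of their ranges. -/
def CompPair (A B : ℕ → ℕ) : Prop :=
  StrictMonoOn A (Set.Ici 1) ∧ StrictMonoOn B (Set.Ici 1) ∧
  (∀ n, 1 ≤ n → 1 ≤ A n) ∧ (∀ n, 1 ≤ n → 1 ≤ B n) ∧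
  ∀ m, 1 ≤ m →
    ((∃ n, 1 ≤ n ∧ A n = m) ∧ ¬(∃ n, 1 ≤ n ∧ B n = m)) ∨
    (¬(∃ n, 1 ≤ n ∧ A n = m) ∧ (∃ n, 1 ≤ n ∧ B n = m))

/-- `(A, B)` is the anti-recurrence pair for the positive linear form `a` of dimension `k`:
`A n = Σ_{j=1}^k a_j * B_{(n-1)k+j}` for all `n ≥ 1`. -/
def AntiRec (k : ℕ) (a : Fin k → ℕ) (A B : ℕ → ℕ) : Prop :=
  CompPair A B ∧
  ∀ n, 1 ≤ n → A n = ∑ j : Fin k, a j * B ((n - 1) * k + (j : ℕ) + 1)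

/-- The anti-Fibonacci subsequence A_{2n+1} equals 3 + 10n, and every positive
integer congruent to 3 mod 10 is an anti-Fibonacci number. -/
theorem stmt17 (A B : ℕ → ℕ) (h : AntiRec 2 ![1, 1] A B) :
    (∀ n : ℕ, A (2 * n + 1) = 3 + 10 * n) ∧
    (∀ m : ℕ, m % 10 = 3 → ∃ n, 1 ≤ n ∧ A n = m) := by
  obtain ⟨⟨hA, hB, hApos, hBpos, hpart⟩, hrec⟩ := h
  have hAlt : ∀ i j, 1 ≤ i → i < j → A i < A j := fun i j hi hij =>
    hA (Set.mem_Ici.mpr hi) (Set.mem_Ici.mpr (hi.trans hij.le)) hij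
  have hBlt : ∀ i j, 1 ≤ i → i < j → B i < B j := fun i j hi hij =>
    hB (Set.mem_Ici.mpr hi) (Set.mem_Ici.mpr (hi.trans hij.le)) hij
  have hrec' : ∀ n, 1 ≤ n → A n = B (2*n-1) + B (2*n) := by
    intro n hn
    have h0 := hrec n hn
    rw [Fin.sum_univ_two] at h0
    simp only [Matrix.cons_val_zero, Matrix.cons_val_one, Matrix.head_cons, one_mul,
      Fin.val_zero, Fin.val_one, Nat.add_zero, Nat.zero_add, add_zero] at h0
    have e1 : (n-1)*2 + 1 = 2*n - 1 := by omega
    have e2 : (n-1)*2 + 1 + 1 = 2*n := by omega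
    rw [e2] at h0
    rw [e1] at h0
    exact h0
  -- determination of the next B value
  have nextB : ∀ j v, 1 ≤ j → B j < v →
      (∀ k, 1 ≤ k → A k ≠ v) →
      (∀ w, B j < w → w < v → ∃ k, 1 ≤ k ∧ A k = w) →
      B (j+1) = v := by
    intro j v hj hlt hnotA hgap
    have hv1 : 1 ≤ v := by omega
    rcases hpart v hv1 with ⟨⟨k, hk, hAk⟩, _⟩ | ⟨_, ⟨i, hi, hBi⟩⟩
    · exact absurd hAk (hnotA k hk)
    · have hji : j < i := by
        by_contra hcon
        push_neg at hcon
        rcases eq_or_lt_of_le hcon with heq | hlt2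
        · subst heq; omega
        · have := hBlt i j hi hlt2; omega
      rcases eq_or_lt_of_le (Nat.succ_le_of_lt hji) with heq | hlt2
      · subst heq; exact hBi
      · exfalso
        have hb1 : B j < B (j+1) := hBlt j (j+1) hj (by omega)
        have hb2 : B (j+1) < v := by have := hBlt (j+1) i (by omega) hlt2; omega
        obtain ⟨k, hk, hAk⟩ := hgap (B (j+1)) hb1 hb2
        have h1 : 1 ≤ B (j+1) := hBpos (j+1) (by omega)
        rcases hpart (B (j+1)) h1 with ⟨_, hnB⟩ | ⟨hnA, _⟩
        · exact hnB ⟨j+1, by omega, rfl⟩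
        · exact hnA ⟨k, hk, hAk⟩
  -- base values
  have hB1 : B 1 = 1 := by
    have h1 : ¬ ∃ k, 1 ≤ k ∧ A k = 1 := by
      rintro ⟨k, hk, hAk⟩
      have h0 := hrec' k hk
      have b1 := hBpos (2*k-1) (by omega)
      have b2 := hBpos (2*k) (by omega)
      omega
    rcases hpart 1 le_rfl with ⟨hy, _⟩ | ⟨_, ⟨i, hi, hBi⟩⟩
    · exact absurd hy h1
    · rcases eq_or_lt_of_le hi with heq | h2
      · subst heq; exact hBi
      · have := hBlt 1 i le_rfl h2
        have := hBpos 1 le_rfl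
        omega
  have hBadd : ∀ d i, 1 ≤ i → B i + d ≤ B (i+d) := by
    intro d
    induction d with
    | zero => intro i hi; simp
    | succ d ihd =>
      intro i hi
      have h1 := ihd i hi
      have h2 := hBlt (i+d) (i+d+1) (by omega) (by omega)
      have e : i + (d+1) = i+d+1 := by omega
      rw [e]
      omega
  have hBge : ∀ i, 1 ≤ i → i ≤ B i := by
    intro i hi
    have h := hBadd (i-1) 1 le_rfl
    have e : 1 + (i-1) = i := by omega
    rw [e] at h
    omega
  have hAval : ∀ k, 1 ≤ k → 4*k-1 ≤ A k := by
    intro k hk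
    have h0 := hrec' k hk
    have g1 := hBge (2*k-1) (by omega)
    have g2 := hBge (2*k) (by omega)
    omega
  have hB2 : B 2 = 2 := by
    rw [show (2:ℕ) = 1+1 by norm_num]
    apply nextB 1 2 le_rfl (by omega)
    · intro k hk hAk
      have := hAval k hk; omega
    · intro w h1 h2; exfalso; omega
  have hA1 : A 1 = 3 := by
    have h0 := hrec' 1 le_rfl
    norm_num at h0
    omega
  have hB3 : B 3 = 4 := by
    rw [show (3:ℕ) = 2+1 by norm_num]
    apply nextB 2 4 (by omega) (by omega)
    · intro k hk hAk
      have := hAval k hk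
      have hk1 : k = 1 := by omega
      subst hk1; omega
    · intro w h1 h2
      exact ⟨1, le_rfl, by omega⟩
  have hB4 : B 4 = 5 := by
    rw [show (4:ℕ) = 3+1 by norm_num]
    apply nextB 3 5 (by omega) (by omega)
    · intro k hk hAk
      have := hAval k hk
      have hk1 : k = 1 := by omega
      subst hk1; omega
    · intro w h1 h2; exfalso; omega
  have hA2 : A 2 = 9 := by
    have h0 := hrec' 2 (by omega)
    norm_num at h0
    omega
  have hB5 : B 5 = 6 := by
    rw [show (5:ℕ) = 4+1 by norm_num]
    apply nextB 4 6 (by omega) (by omega)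
    · intro k hk hAk
      have := hAval k hk
      have hk1 : k = 1 := by omega
      subst hk1; omega
    · intro w h1 h2; exfalso; omega
  have hB6 : B 6 = 7 := by
    rw [show (6:ℕ) = 5+1 by norm_num]
    apply nextB 5 7 (by omega) (by omega)
    · intro k hk hAk
      have := hAval k hk
      have hk1 : k = 1 ∨ k = 2 := by omega
      rcases hk1 with rfl | rfl <;> omega
    · intro w h1 h2; exfalso; omega
  have hA3 : A 3 = 13 := by
    have h0 := hrec' 3 (by omega)
    norm_num at h0
    omega
  -- the main invariant, by induction
  have main : ∀ n, (∀ k, k ≤ n → A (2*k+1) = 10*k+3) ∧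
      (∀ k, 1 ≤ k → k ≤ n → A (2*k) + 2 = 10*k ∨ A (2*k) + 1 = 10*k) ∧
      (∀ k, k ≤ n → B (4*k+1) = 5*k+1 ∧ B (4*k+2) = 5*k+2) := by
    intro n
    induction n with
    | zero =>
      refine ⟨?_, ?_, ?_⟩
      · intro k hk
        have : k = 0 := by omega
        subst this
        rw [show 2*0+1 = 1 by norm_num]
        omega
      · intro k h1 h2; omega
      · intro k hk
        have : k = 0 := by omega
        subst this
        rw [show 4*0+1 = 1 by norm_num, show 4*0+2 = 2 by norm_num]
        omega
    | succ n ih =>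
      obtain ⟨ih1, ih2, ih3⟩ := ih
      by_cases hn0 : n = 0
      · subst hn0
        refine ⟨?_, ?_, ?_⟩
        · intro k hk
          have : k = 0 ∨ k = 1 := by omega
          rcases this with rfl | rfl
          · rw [show 2*0+1 = 1 by norm_num]; omega
          · rw [show 2*1+1 = 3 by norm_num]; omega
        · intro k h1 h2
          have : k = 1 := by omega
          subst this
          rw [show 2*1 = 2 by norm_num]
          omega
        · intro k hk
          have : k = 0 ∨ k = 1 := by omega
          rcases this with rfl | rfl
          · rw [show 4*0+1 = 1 by norm_num, show 4*0+2 = 2 by norm_num]; omega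
          · rw [show 4*1+1 = 5 by norm_num, show 4*1+2 = 6 by norm_num]; omega
      · have hn1 : 1 ≤ n := by omega
        obtain ⟨hb1, hb2⟩ := ih3 n le_rfl
        have hnotA : ∀ v, v ≤ 8*n+6 → (∀ j, j ≤ n → v ≠ 10*j+3) →
            (∀ j, 1 ≤ j → j ≤ n → A (2*j) ≠ v) → ∀ k, 1 ≤ k → A k ≠ v := by
          intro v hv h3 hev k hk hAk
          have h4 := hAval k hk
          have hk2 : k ≤ 2*n+1 := by omega
          rcases Nat.even_or_odd k with ⟨j, hj⟩ | ⟨j, hj⟩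
          · subst hj
            exact hev j (by omega) (by omega) (by rw [two_mul]; exact hAk)
          · subst hj
            have h5 := ih1 j (by omega)
            exact h3 j (by omega) (by omega)
        have hstep1 : B (4*n+4) = 5*n+5 ∧
            (A (2*n+2) + 2 = 10*n+10 ∨ A (2*n+2) + 1 = 10*n+10) := by
          rcases Nat.even_or_odd n with ⟨t, ht⟩ | ⟨t, ht⟩
          · -- n = t + t, even
            have hB43 : B (4*n+3) = 5*n+4 := by
              rw [show 4*n+3 = (4*n+2)+1 by omega]
              apply nextB (4*n+2) (5*n+4) (by omega) (by omega)
              · apply hnotA (5*n+4) (by omega)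
                · intro j hj; omega
                · intro j h1 h2
                  rcases ih2 j h1 h2 with h' | h' <;> omega
              · intro w h1 h2
                refine ⟨2*t+1, by omega, ?_⟩
                rw [ih1 t (by omega)]
                omega
            have hB44 : B (4*n+4) = 5*n+5 := by
              rw [show 4*n+4 = (4*n+3)+1 by omega]
              apply nextB (4*n+3) (5*n+5) (by omega) (by omega)
              · apply hnotA (5*n+5) (by omega)
                · intro j hj; omega
                · intro j h1 h2
                  rcases ih2 j h1 h2 with h' | h' <;> omega
              · intro w h1 h2; exfalso; omega
            have hA2n2 : A (2*n+2) = 10*n+9 := by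
              have h0 := hrec' (2*n+2) (by omega)
              rw [show 2*(2*n+2)-1 = 4*n+3 by omega, show 2*(2*n+2) = 4*n+4 by omega] at h0
              omega
            exact ⟨hB44, Or.inr (by omega)⟩
          · -- n = 2t+1, odd
            rcases ih2 (t+1) (by omega) (by omega) with ha | ha
            · -- A (2t+2) = 10t+8
              have hB43 : B (4*n+3) = 5*n+4 := by
                rw [show 4*n+3 = (4*n+2)+1 by omega]
                apply nextB (4*n+2) (5*n+4) (by omega) (by omega)
                · apply hnotA (5*n+4) (by omega)
                  · intro j hj; omega
                  · intro j h1 h2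
                    rcases ih2 j h1 h2 with h' | h'
                    · omega
                    · intro hveq
                      have hj : j = t+1 := by omega
                      subst hj; omega
                · intro w h1 h2
                  exact ⟨2*(t+1), by omega, by omega⟩
              have hB44 : B (4*n+4) = 5*n+5 := by
                rw [show 4*n+4 = (4*n+3)+1 by omega]
                apply nextB (4*n+3) (5*n+5) (by omega) (by omega)
                · apply hnotA (5*n+5) (by omega)
                  · intro j hj; omega
                  · intro j h1 h2
                    rcases ih2 j h1 h2 with h' | h' <;> omega
                · intro w h1 h2; exfalso; omega
              have hA2n2 : A (2*n+2) = 10*n+9 := by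
                have h0 := hrec' (2*n+2) (by omega)
                rw [show 2*(2*n+2)-1 = 4*n+3 by omega, show 2*(2*n+2) = 4*n+4 by omega] at h0
                omega
              exact ⟨hB44, Or.inr (by omega)⟩
            · -- A (2t+2) = 10t+9
              have hB43 : B (4*n+3) = 5*n+3 := by
                rw [show 4*n+3 = (4*n+2)+1 by omega]
                apply nextB (4*n+2) (5*n+3) (by omega) (by omega)
                · apply hnotA (5*n+3) (by omega)
                  · intro j hj; omega
                  · intro j h1 h2
                    rcases ih2 j h1 h2 with h' | h'
                    · intro hveq
                      have hj : j = t+1 := by omega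
                      subst hj; omega
                    · omega
                · intro w h1 h2; exfalso; omega
              have hB44 : B (4*n+4) = 5*n+5 := by
                rw [show 4*n+4 = (4*n+3)+1 by omega]
                apply nextB (4*n+3) (5*n+5) (by omega) (by omega)
                · apply hnotA (5*n+5) (by omega)
                  · intro j hj; omega
                  · intro j h1 h2
                    rcases ih2 j h1 h2 with h' | h' <;> omega
                · intro w h1 h2
                  exact ⟨2*(t+1), by omega, by omega⟩
              have hA2n2 : A (2*n+2) = 10*n+8 := by
                have h0 := hrec' (2*n+2) (by omega)
                rw [show 2*(2*n+2)-1 = 4*n+3 by omega, show 2*(2*n+2) = 4*n+4 by omega] at h0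
                omega
              exact ⟨hB44, Or.inl (by omega)⟩
        obtain ⟨hB44, hdisj⟩ := hstep1
        have hB45 : B (4*n+5) = 5*n+6 := by
          rw [show 4*n+5 = (4*n+4)+1 by omega]
          apply nextB (4*n+4) (5*n+6) (by omega) (by omega)
          · apply hnotA (5*n+6) (by omega)
            · intro j hj; omega
            · intro j h1 h2
              rcases ih2 j h1 h2 with h' | h' <;> omega
          · intro w h1 h2; exfalso; omega
        have hB46 : B (4*n+6) = 5*n+7 := by
          rw [show 4*n+6 = (4*n+5)+1 by omega]
          apply nextB (4*n+5) (5*n+7) (by omega) (by omega)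
          · apply hnotA (5*n+7) (by omega)
            · intro j hj; omega
            · intro j h1 h2
              rcases ih2 j h1 h2 with h' | h' <;> omega
          · intro w h1 h2; exfalso; omega
        have hA2n3 : A (2*n+3) = 10*n+13 := by
          have h0 := hrec' (2*n+3) (by omega)
          rw [show 2*(2*n+3)-1 = 4*n+5 by omega, show 2*(2*n+3) = 4*n+6 by omega] at h0
          omega
        refine ⟨?_, ?_, ?_⟩
        · intro k hk
          by_cases hkn : k ≤ n
          · exact ih1 k hkn
          · have hk1 : k = n+1 := by omega
            subst hk1
            rw [show 2*(n+1)+1 = 2*n+3 by omega]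
            omega
        · intro k h1 h2
          by_cases hkn : k ≤ n
          · exact ih2 k h1 hkn
          · have hk1 : k = n+1 := by omega
            subst hk1
            rw [show 2*(n+1) = 2*n+2 by omega]
            omega
        · intro k hk
          by_cases hkn : k ≤ n
          · exact ih3 k hkn
          · have hk1 : k = n+1 := by omega
            subst hk1
            rw [show 4*(n+1)+1 = 4*n+5 by omega, show 4*(n+1)+2 = 4*n+6 by omega]
            omega
  constructor
  · intro n
    have h0 := (main n).1 n le_rfl
    omega
  · intro m hm
    refine ⟨2*(m/10)+1, by omega, ?_⟩
    have h0 := (main (m/10)).1 (m/10) le_rfl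
    omega
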